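/- Let 𝒢 be a subgroup of the symmetric group S_n acting on ℝ^n by coordinate permutation, let p ∈ [1,∞), and let F ∈ C(ℝ^n; ℝ^m). Suppose that for every compact set K ⊂ ℝ^n and every ε > 0 there exists a continuous 𝒢 invariant function F̂ : ℝ^n → ℝ^m with ‖F − F̂‖_{L^p(K)} < ε. Then F itself is 𝒢 invariant. -/

import Mathlib

open MeasureTheory

namespace SymDyn

/-- Action of a permutation on ℝⁿ by permuting coordinates: `(𝔤(x))_i = x_{𝔤(i)}`. -/
def permAct {n : ℕ} (g : Equiv.Perm (Fin n)) (x : Fin n → ℝ) : Fin n → ℝ :=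
  fun i => x (g i)

/-- `F` is 𝒢 invariant. -/
def IsInvariant {n : ℕ} {α : Type*} (G : Subgroup (Equiv.Perm (Fin n)))
    (F : (Fin n → ℝ) → α) : Prop :=
  ∀ g ∈ G, ∀ x, F (permAct g x) = F x

/-- `f` is 𝒢 equivariant. -/
def IsEquivariant {n : ℕ} (G : Subgroup (Equiv.Perm (Fin n)))
    (f : (Fin n → ℝ) → (Fin n → ℝ)) : Prop :=
  ∀ g ∈ G, ∀ x, f (permAct g x) = permAct g (f x)

/-- `G` is a transitive permutation group on indices. -/
def IsTransitive {n : ℕ} (G : Subgroup (Equiv.Perm (Fin n))) : Prop :=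
  ∀ i j : Fin n, ∃ g ∈ G, g i = j

/-- Lipschitz with some (finite) constant. -/
def IsLip {E F : Type*} [PseudoEMetricSpace E] [PseudoEMetricSpace F] (f : E → F) : Prop :=
  ∃ K : NNReal, LipschitzWith K f

/-- `φ` is the time-`T` flow map of the ODE `ż = f(z)`. -/
def IsFlowMap {n : ℕ} (f : (Fin n → ℝ) → (Fin n → ℝ)) (T : ℝ)
    (φ : (Fin n → ℝ) → (Fin n → ℝ)) : Prop :=
  ∀ x : Fin n → ℝ, ∃ z : ℝ → (Fin n → ℝ),
    z 0 = x ∧ (∀ t : ℝ, HasDerivAt z (f (z t)) t) ∧ φ x = z T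

/-- Attainable set of a control family: all finite compositions
`φ(f₁,τ₁) ∘ ⋯ ∘ φ(f_k,τ_k)` of flow maps of members of `𝓕`. -/
def AttainSet {n : ℕ} (𝓕 : Set ((Fin n → ℝ) → (Fin n → ℝ))) :
    Set ((Fin n → ℝ) → (Fin n → ℝ)) :=
  { φ | ∃ k : ℕ, 1 ≤ k ∧
      ∃ (fs : Fin k → (Fin n → ℝ) → (Fin n → ℝ)) (τ : Fin k → ℝ)
        (ψ : Fin k → (Fin n → ℝ) → (Fin n → ℝ)),
        (∀ i, fs i ∈ 𝓕 ∧ 0 ≤ τ i ∧ IsFlowMap (fs i) (τ i) (ψ i)) ∧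
        φ = (List.ofFn ψ).foldr (· ∘ ·) id }

/-- Dynamical hypothesis space `H_ode(𝓕,𝓖) = {g ∘ φ : g ∈ 𝓖, φ ∈ A_𝓕}`. -/
def Hode {n : ℕ} {β : Type*} (𝓕 : Set ((Fin n → ℝ) → (Fin n → ℝ)))
    (𝓖 : Set ((Fin n → ℝ) → β)) : Set ((Fin n → ℝ) → β) :=
  { F | ∃ g ∈ 𝓖, ∃ φ ∈ AttainSet 𝓕, F = g ∘ φ }

/-- Closure of a family of functions in the topology of compact convergence. -/
def ccClosure {α F : Type*} [TopologicalSpace α] [NormedAddCommGroup F]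
    (S : Set (α → F)) : Set (α → F) :=
  { h | ∀ K : Set α, IsCompact K → ∀ ε : ℝ, 0 < ε → ∃ f ∈ S, ∀ x ∈ K, ‖f x - h x‖ ≤ ε }

/-- `CH̄(S)`: closure of the convex hull in the topology of compact convergence. -/
def CHbar {α F : Type*} [TopologicalSpace α] [NormedAddCommGroup F] [NormedSpace ℝ F]
    (S : Set (α → F)) : Set (α → F) :=
  ccClosure (convexHull ℝ S)

/-- The `coor` operator: scalar functions `f₁` such that for some `𝔱_i ∈ G` with
`𝔱_i(1) = i`, the assembled mapping `[f₁∘𝔱_1, …, f₁∘𝔱_n]` belongs to `𝓕`. -/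
def coorFam {n : ℕ} [NeZero n] (G : Subgroup (Equiv.Perm (Fin n)))
    (𝓕 : Set ((Fin n → ℝ) → (Fin n → ℝ))) : Set ((Fin n → ℝ) → ℝ) :=
  { f1 | ∃ t : Fin n → Equiv.Perm (Fin n),
      (∀ i, t i ∈ G ∧ t i 0 = i) ∧ (fun x i => f1 (permAct (t i) x)) ∈ 𝓕 }

/-- One-dimensional well function: Lipschitz with zero set a nondegenerate
closed bounded interval. -/
def IsWell1D (h : ℝ → ℝ) : Prop :=
  IsLip h ∧ ∃ a b : ℝ, a < b ∧ {x : ℝ | h x = 0} = Set.Icc a b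

/-- Symmetric invariant well function. -/
def IsSymWell {n : ℕ} (τ : (Fin n → ℝ) → ℝ) : Prop :=
  IsLip τ ∧
  (∀ g : Equiv.Perm (Fin n), ∀ x, τ (permAct g x) = τ x) ∧
  (∃ I : Set ℝ, I.Nonempty ∧ I.OrdConnected ∧ Bornology.IsBounded I ∧
      ∀ x : Fin n → ℝ, (∀ i, x i ∈ I) → τ x = 0) ∧
  (∀ i : Fin n, ∀ b : ℝ, 0 < b → ∃ a : ℝ, 0 < a ∧
      ∀ x : Fin n → ℝ, a < |x i| → (∀ j, j ≠ i → |x j| < b) → τ x ≠ 0)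

/-- A point is in general position iff its coordinates are pairwise distinct. -/
def GeneralPos {n : ℕ} (x : Fin n → ℝ) : Prop := Function.Injective x

/-- The similarity `s̄(x,y)` is nonzero: at least one of the two points is in
general position, and some coordinate value is shared. -/
def SimilarPos {n : ℕ} (x y : Fin n → ℝ) : Prop :=
  (GeneralPos x ∨ GeneralPos y) ∧ ∃ i j : Fin n, x i = y j

/-- The perturbation property of a control family. -/
def PerturbProp {n : ℕ} (𝓕 : Set ((Fin n → ℝ) → (Fin n → ℝ))) : Prop :=
  ∀ x y : Fin n → ℝ, SimilarPos x y →
    ∃ f ∈ 𝓕, ∃ u : ℝ → ℝ, Continuous u ∧ StrictMono u ∧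
      ∃ i : Fin n, x i = y i ∧ f (fun j => u (x j)) i ≠ f (fun j => u (y j)) i

/-- Cross section `Q_𝔤 = {x : x_{𝔤⁻¹(1)} > x_{𝔤⁻¹(2)} > ⋯ > x_{𝔤⁻¹(n)}}`. -/
def crossSec {n : ℕ} (g : Equiv.Perm (Fin n)) : Set (Fin n → ℝ) :=
  { x | ∀ i j : Fin n, i < j → x (g⁻¹ j) < x (g⁻¹ i) }

/-- `A` is a (right) transversal of the subgroup `G`. -/
def IsTransversal {n : ℕ} (G : Subgroup (Equiv.Perm (Fin n)))
    (A : Set (Equiv.Perm (Fin n))) : Prop :=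
  (∀ a ∈ A, ∀ b ∈ A, a ≠ b → a * b⁻¹ ∉ G) ∧
  (∀ b : Equiv.Perm (Fin n), ∃ a ∈ A, a * b⁻¹ ∈ G)

/-- Cross section of a transversal: `Q_A = ⋃_{𝔞 ∈ A} Q_𝔞`. -/
def crossSecA {n : ℕ} (A : Set (Equiv.Perm (Fin n))) : Set (Fin n → ℝ) :=
  ⋃ a ∈ A, crossSec a

/-- `𝔞` and `𝔟` are directly `𝓕` connected. -/
def DirectlyConn {n : ℕ} (𝓕 : Set ((Fin n → ℝ) → (Fin n → ℝ)))
    (a b : Equiv.Perm (Fin n)) : Prop :=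
  ∃ i j : Fin n, i ≠ j ∧ a = Equiv.swap i j * b ∧
    ∃ z ∈ frontier (crossSec a) ∩ frontier (crossSec b), ∃ f ∈ 𝓕, f z i ≠ f z j

/-- `𝔞` and `𝔟` are `𝓕` connected (joined by a chain of directly connected elements). -/
def ConnIn {n : ℕ} (𝓕 : Set ((Fin n → ℝ) → (Fin n → ℝ)))
    (a b : Equiv.Perm (Fin n)) : Prop :=
  ∃ (s : ℕ) (g : Fin (s + 1) → Equiv.Perm (Fin n)), g 0 = a ∧ g (Fin.last s) = b ∧
    ∀ i : Fin s, DirectlyConn 𝓕 (g i.castSucc) (g i.succ)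

/-- `𝓕` resolves `G`: it has the perturbation property and is `G` transversally
transitive. -/
def Resolves {n : ℕ} (G : Subgroup (Equiv.Perm (Fin n)))
    (𝓕 : Set ((Fin n → ℝ) → (Fin n → ℝ))) : Prop :=
  PerturbProp 𝓕 ∧ ∃ A : Set (Equiv.Perm (Fin n)), IsTransversal G A ∧
    ∀ a ∈ A, ∀ b ∈ A, a ≠ b → ConnIn 𝓕 a b

/-- A finite point set is `G` distinct: the `G` orbits of its points are distinct. -/
def GDistinct {n M : ℕ} (G : Subgroup (Equiv.Perm (Fin n)))
    (x : Fin M → Fin n → ℝ) : Prop :=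
  ∀ g ∈ G, ∀ i j : Fin M, permAct g (x i) = x j → g = 1 ∧ i = j

/-- `x ≺ y`: every coordinate of `x` is below every coordinate of `y`. -/
def precLT {n : ℕ} (x y : Fin n → ℝ) : Prop := ∀ i j : Fin n, x i < y j

/-- A finite point set is partially ordered. -/
def PartiallyOrderedPts {n m : ℕ} (x : Fin m → Fin n → ℝ) : Prop :=
  ∀ i j : Fin m,
    ((j < i ∧ GeneralPos (x i) ∧ GeneralPos (x j)) ∨
      (¬ GeneralPos (x i) ∧ GeneralPos (x j))) → precLT (x i) (x j)

/-- A finite point set is well perturbed: whenever two (indexed) coordinate values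
coincide nontrivially, both points fail to be in general position. -/
def WellPerturbed {n m : ℕ} (y : Fin m → Fin n → ℝ) : Prop :=
  ∀ (j l : Fin m) (i k : Fin n), (i, j) ≠ (k, l) → y j i = y l k →
    ¬ GeneralPos (y j) ∧ ¬ GeneralPos (y l)

/-- Composition of a finite family of maps, applying the index-`0` map first. -/
def foldComp {E : Type*} {s : ℕ} (Φ : Fin s → E → E) : E → E :=
  (List.ofFn Φ).foldl (fun acc f => f ∘ acc) id

/-- `t` is a partition `0 = t₀ < t₁ < ⋯ < t_s = T` of `[0,T]`. -/
def IsPartition {s : ℕ} (T : ℝ) (t : Fin (s + 1) → ℝ) : Prop :=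
  StrictMono t ∧ t 0 = 0 ∧ t (Fin.last s) = T

/-- Discrete flow of a one-step numerical integrator `Φ` over a partition. -/
def discFlow {n : ℕ} (Φ : ℝ → (Fin n → ℝ) → (Fin n → ℝ)) {s : ℕ}
    (t : Fin (s + 1) → ℝ) : (Fin n → ℝ) → (Fin n → ℝ) :=
  foldComp (fun i : Fin s => Φ (t i.succ - t i.castSucc))

/-- Convergence of a numerical scheme `Φ` for the vector field `f`. -/
def ConvergentScheme {n : ℕ} (f : (Fin n → ℝ) → (Fin n → ℝ))
    (Φ : ℝ → (Fin n → ℝ) → (Fin n → ℝ)) : Prop :=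
  (∀ K : Set (Fin n → ℝ), IsCompact K → ∀ ε : ℝ, 0 < ε → ∃ δ > (0 : ℝ),
      ∀ τ : ℝ, 0 < τ → τ < δ → ∀ x ∈ K, ‖Φ τ x - x‖ ≤ ε) ∧
  (∀ T : ℝ, ∀ φT : (Fin n → ℝ) → (Fin n → ℝ), IsFlowMap f T φT →
      ∀ K : Set (Fin n → ℝ), IsCompact K → ∀ ε : ℝ, 0 < ε → ∃ δ > (0 : ℝ),
      ∀ (s : ℕ) (t : Fin (s + 1) → ℝ), IsPartition T t →
        (∀ i : Fin s, t i.succ - t i.castSucc < δ) →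
        ∀ x ∈ K, ‖discFlow Φ t x - φT x‖ ≤ ε) ∧
  (∃ g : (Fin n → ℝ) → ℝ → ℝ, Continuous (fun q : (Fin n → ℝ) × ℝ => g q.1 q.2) ∧
      ∀ T : ℝ, 0 ≤ T → ∀ (s : ℕ) (t : Fin (s + 1) → ℝ), IsPartition T t →
        ∀ x, ‖discFlow Φ t x‖ ≤ g x T)

/-- `L^p` error of `f` on the region `K` (with respect to Lebesgue measure). -/
noncomputable def lpErr {n : ℕ} {β : Type*} [NormedAddCommGroup β]
    (p : ℝ) (K : Set (Fin n → ℝ)) (f : (Fin n → ℝ) → β) : ENNReal :=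
  eLpNorm f (ENNReal.ofReal p) (volume.restrict K)

/-- Universal approximation property in `L^p` on compact sets. -/
def HasUAP {n : ℕ} {β : Type*} [NormedAddCommGroup β]
    (p : ℝ) (H : Set ((Fin n → ℝ) → β)) : Prop :=
  ∀ F : (Fin n → ℝ) → β, Continuous F → ∀ K : Set (Fin n → ℝ), IsCompact K →
    ∀ ε : ℝ, 0 < ε → ∃ Fh ∈ H, lpErr p K (fun x => F x - Fh x) ≤ ENNReal.ofReal ε

/-- `G` universal approximation property in `L^p` on compact sets. -/
def HasGUAP {n : ℕ} {β : Type*} [NormedAddCommGroup β]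
    (G : Subgroup (Equiv.Perm (Fin n))) (p : ℝ) (H : Set ((Fin n → ℝ) → β)) : Prop :=
  ∀ F : (Fin n → ℝ) → β, Continuous F → IsInvariant G F →
    ∀ K : Set (Fin n → ℝ), IsCompact K →
    ∀ ε : ℝ, 0 < ε → ∃ Fh ∈ H, lpErr p K (fun x => F x - Fh x) ≤ ENNReal.ofReal ε

/-- Discretized attainable set obtained from a numerical scheme `sch`. -/
def discAttain {n : ℕ} (𝓕 : Set ((Fin n → ℝ) → (Fin n → ℝ)))
    (sch : ((Fin n → ℝ) → (Fin n → ℝ)) → ℝ → (Fin n → ℝ) → (Fin n → ℝ)) :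
    Set ((Fin n → ℝ) → (Fin n → ℝ)) :=
  { φ | ∃ l : ℕ, 1 ≤ l ∧ ∃ (fs : Fin l → (Fin n → ℝ) → (Fin n → ℝ)) (t : Fin (l + 1) → ℝ),
      t 0 = 0 ∧ StrictMono t ∧ (∀ i, fs i ∈ 𝓕) ∧
      φ = foldComp (fun i : Fin l => sch (fs i) (t i.succ - t i.castSucc)) }


/-- If a continuous `F : ℝⁿ → ℝᵐ` can be approximated in `L^p` on every
compact set by continuous `𝒢` invariant functions, then `F` is itself `𝒢` invariant. -/
theorem closure_of_invariant_functions
    (n m : ℕ) (G : Subgroup (Equiv.Perm (Fin n))) (p : ℝ) (hp : 1 ≤ p)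
    (F : (Fin n → ℝ) → Fin m → ℝ) (hF : Continuous F)
    (happrox : ∀ K : Set (Fin n → ℝ), IsCompact K → ∀ ε : ℝ, 0 < ε →
      ∃ Fh : (Fin n → ℝ) → Fin m → ℝ, Continuous Fh ∧ IsInvariant G Fh ∧
        lpErr p K (fun x => F x - Fh x) < ENNReal.ofReal ε) :
    IsInvariant G F := by
  classical
  intro g hg x₀
  by_contra hne
  -- basic exponent facts
  set q : ENNReal := ENNReal.ofReal p with hq
  have hq1 : 1 ≤ q := ENNReal.one_le_ofReal.mpr hp
  have hq0 : q ≠ 0 := by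
    intro h; rw [h] at hq1; exact (not_le.mpr zero_lt_one) hq1
  have hqt : q ≠ ⊤ := ENNReal.ofReal_ne_top
  have hqtr : 0 ≤ 1 / q.toReal := by positivity
  -- the permutation map as a measurable equivalence
  set E := MeasurableEquiv.piCongrLeft (fun _ : Fin n => ℝ) (g.symm : Fin n ≃ Fin n) with hE
  have hEeq : ⇑E = permAct g := by
    funext x; ext i; simp [hE, MeasurableEquiv.piCongrLeft, permAct]
    simpa using Equiv.piCongrLeft_apply_apply (fun _ : Fin n => ℝ) g.symm x (g i)
  have hTmp : MeasurePreserving (permAct g) (volume : Measure (Fin n → ℝ)) volume := by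
    rw [← hEeq]
    exact volume_measurePreserving_piCongrLeft (fun _ : Fin n => ℝ) g.symm
  have hTemb : MeasurableEmbedding (permAct g) := by
    rw [← hEeq]; exact E.measurableEmbedding
  have hTcont : Continuous (permAct g) :=
    continuous_pi fun i => continuous_apply (g i)
  -- the discrepancy function
  set H : (Fin n → ℝ) → Fin m → ℝ := fun x => F (permAct g x) - F x with hHdef
  have hHcont : Continuous H := (hF.comp hTcont).sub hF
  set c : ℝ := ‖F (permAct g x₀) - F x₀‖ with hc
  have hcpos : 0 < c := by
    rw [hc, norm_pos_iff, sub_ne_zero]; exact hne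
  -- a ball where ‖H‖ ≥ c/2
  have hUopen : IsOpen {x | c / 2 < ‖H x‖} := isOpen_lt continuous_const hHcont.norm
  obtain ⟨δ, hδpos, hballU⟩ := Metric.isOpen_iff.mp hUopen x₀ (by
    show c / 2 < ‖H x₀‖
    simpa [hHdef, ← hc] using half_lt_self hcpos)
  set B : Set (Fin n → ℝ) := Metric.closedBall x₀ (δ / 2) with hB
  have hBsub : B ⊆ Metric.ball x₀ δ := Metric.closedBall_subset_ball (by linarith)
  have hBc : IsCompact B := isCompact_closedBall _ _
  set K : Set (Fin n → ℝ) := B ∪ (permAct g '' B) with hK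
  have hKc : IsCompact K := hBc.union (hBc.image hTcont)
  -- measure of B
  have hV0 : 0 < volume B := by
    refine lt_of_lt_of_le (Metric.measure_ball_pos volume x₀ (by linarith : (0:ℝ) < δ / 2)) ?_
    exact measure_mono Metric.ball_subset_closedBall
  have hVt : volume B ≠ ⊤ := hBc.measure_lt_top.ne
  -- lower bound quantity
  set L : ENNReal := ENNReal.ofReal (c / 2) * volume B ^ (1 / q.toReal) with hL
  have hL0 : L ≠ 0 := by
    refine mul_ne_zero ?_ (ENNReal.rpow_pos hV0 hVt).ne'
    simpa using ENNReal.ofReal_pos.mpr (by linarith : (0:ℝ) < c / 2) |>.ne'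
  have hLt : L ≠ ⊤ :=
    ENNReal.mul_ne_top ENNReal.ofReal_ne_top (ENNReal.rpow_ne_top_of_nonneg hqtr hVt)
  have hLtr : 0 < L.toReal := ENNReal.toReal_pos hL0 hLt
  set ε : ℝ := L.toReal / 3 with hε
  have hεpos : 0 < ε := by positivity
  obtain ⟨Fh, hFhc, hFhinv, herr⟩ := happrox K hKc ε hεpos
  have herr' : eLpNorm (fun x => F x - Fh x) q (volume.restrict K) < ENNReal.ofReal ε := herr
  -- lower bound: constant ≤ H on B
  have hconst_le : eLpNorm (fun _ : Fin n → ℝ => (c / 2 : ℝ)) q (volume.restrict B)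
      ≤ eLpNorm H q (volume.restrict B) := by
    refine eLpNorm_mono_ae ?_
    refine (ae_restrict_iff' measurableSet_closedBall).mpr (Filter.Eventually.of_forall ?_)
    intro x hx
    have := hballU (hBsub hx)
    calc ‖(c / 2 : ℝ)‖ = c / 2 := Real.norm_of_nonneg (by linarith)
      _ ≤ ‖H x‖ := le_of_lt this
  have hconst_eq : eLpNorm (fun _ : Fin n → ℝ => (c / 2 : ℝ)) q (volume.restrict B) = L := by
    rw [eLpNorm_const _ hq0 (fun h => hV0.ne' (Measure.restrict_eq_zero.mp h))]
    rw [Measure.restrict_apply_univ, hL]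
    congr 1
    exact Real.enorm_eq_ofReal (by linarith)
  -- splitting
  have hsplit : H = (fun x => F (permAct g x) - Fh (permAct g x)) + (fun x => Fh x - F x) := by
    funext x
    rw [Pi.add_apply, hFhinv g hg x, sub_add_sub_cancel]
  -- first term
  have ha : eLpNorm (fun x => F (permAct g x) - Fh (permAct g x)) q (volume.restrict B)
      ≤ eLpNorm (fun x => F x - Fh x) q (volume.restrict K) := by
    have hmp : MeasurePreserving (permAct g) (volume.restrict B)
        (volume.restrict (permAct g '' B)) := hTmp.restrict_image_emb hTemb B
    have hcomp : eLpNorm ((fun x => F x - Fh x) ∘ permAct g) q (volume.restrict B)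
        = eLpNorm (fun x => F x - Fh x) q (volume.restrict (permAct g '' B)) :=
      eLpNorm_comp_measurePreserving (hF.sub hFhc).aestronglyMeasurable hmp
    have : (fun x => F (permAct g x) - Fh (permAct g x))
        = (fun x => F x - Fh x) ∘ permAct g := rfl
    rw [this, hcomp]
    exact eLpNorm_mono_measure _ (Measure.restrict_mono Set.subset_union_right le_rfl)
  -- second term
  have hb : eLpNorm (fun x => Fh x - F x) q (volume.restrict B)
      ≤ eLpNorm (fun x => F x - Fh x) q (volume.restrict K) := by
    have hneg : (fun x => Fh x - F x) = -(fun x : Fin n → ℝ => F x - Fh x) := by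
      funext x; simp
    rw [hneg, eLpNorm_neg]
    exact eLpNorm_mono_measure _ (Measure.restrict_mono Set.subset_union_left le_rfl)
  -- triangle inequality
  have htri : eLpNorm H q (volume.restrict B)
      ≤ eLpNorm (fun x => F (permAct g x) - Fh (permAct g x)) q (volume.restrict B)
        + eLpNorm (fun x => Fh x - F x) q (volume.restrict B) := by
    rw [hsplit]
    exact eLpNorm_add_le ((hF.comp hTcont).sub (hFhc.comp hTcont)).aestronglyMeasurable
      (hFhc.sub hF).aestronglyMeasurable hq1
  -- combine
  have hupper : L < ENNReal.ofReal ε + ENNReal.ofReal ε := by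
    calc L = eLpNorm (fun _ : Fin n → ℝ => (c / 2 : ℝ)) q (volume.restrict B) := hconst_eq.symm
      _ ≤ eLpNorm H q (volume.restrict B) := hconst_le
      _ ≤ _ + _ := htri
      _ < ENNReal.ofReal ε + ENNReal.ofReal ε :=
        ENNReal.add_lt_add (lt_of_le_of_lt ha herr') (lt_of_le_of_lt hb herr')
  have hfin : ENNReal.ofReal ε + ENNReal.ofReal ε < L := by
    rw [← ENNReal.ofReal_add hεpos.le hεpos.le]
    have : ε + ε < L.toReal := by rw [hε]; linarith
    calc ENNReal.ofReal (ε + ε) < ENNReal.ofReal L.toReal :=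
          (ENNReal.ofReal_lt_ofReal_iff hLtr).mpr this
      _ = L := ENNReal.ofReal_toReal hLt
  exact absurd (hupper.trans hfin) (lt_irrefl _)
end SymDyn
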